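/- Let μ ≥ 0 be a finite measure on a measurable space T, x ∈ L¹₊(μ) with x ≠ 0, and a_i ∈ L¹(μ), i ∈ I finite, functions with ∫_T |a_i| x dμ < ∞ and such that the family (a_i)_{i∈I} is linearly independent on every measurable subset of positive measure. Then there exists a sequence (y_k)_{k ≥ k₀} in L^∞(μ) with: x_k := min(x,k) + y_k ≥ 0 a.e., ∫_T a_i x_k dμ = ∫_T a_i x dμ for all i ∈ I, |y_k| ≤ x a.e., and y_k → 0 a.e. -/

import Mathlib

open MeasureTheory Filter

/-- Lemma 1 (after Borwein–Lewis): given `x ∈ L¹₊(μ) \ {0}` and finitely many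
    `a_i ∈ L¹(μ)` with `∫|a_i| x dμ < ∞`, linearly independent on every subset of
    positive measure, there are essentially bounded `y_k` with `min(x,k) + y_k ≥ 0` a.e.,
    the same moments as `x`, `|y_k| ≤ x` and `y_k → 0` a.e. -/
theorem exists_bounded_perturbation {T : Type*} [MeasurableSpace T]
    (μ : Measure T) [IsFiniteMeasure μ]
    {ι : Type*} [Fintype ι] (a : ι → T → ℝ) (ha : ∀ i, Integrable (a i) μ)
    (x : T → ℝ) (hx : Integrable x μ) (hx0 : ∀ᵐ t ∂μ, 0 ≤ x t)
    (hxne : ¬ (x =ᵐ[μ] 0))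
    (hax : ∀ i, Integrable (fun t => |a i t| * x t) μ)
    (hindep : ∀ Z : Set T, MeasurableSet Z → 0 < μ Z →
      ∀ c : ι → ℝ, (∀ᵐ t ∂μ, t ∈ Z → ∑ i, c i * a i t = 0) → c = 0) :
    ∃ (y : ℕ → T → ℝ) (k₀ : ℕ), ∀ k ≥ k₀,
      MemLp (y k) ⊤ μ ∧
      (∀ᵐ t ∂μ, 0 ≤ min (x t) (k : ℝ) + y k t) ∧
      (∀ i, ∫ t, a i t * (min (x t) (k : ℝ) + y k t) ∂μ = ∫ t, a i t * x t ∂μ) ∧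
      (∀ᵐ t ∂μ, |y k t| ≤ x t) ∧
      (∀ᵐ t ∂μ, Tendsto (fun k => y k t) atTop (nhds 0)) := by
  classical
  -- measurable representatives
  set x' : T → ℝ := hx.1.mk x with hx'def
  have hx'meas : Measurable x' := hx.1.stronglyMeasurable_mk.measurable
  have hxx' : x =ᵐ[μ] x' := hx.1.ae_eq_mk
  set a' : ι → T → ℝ := fun i => (ha i).1.mk (a i) with ha'def
  have ha'meas : ∀ i, Measurable (a' i) := fun i => (ha i).1.stronglyMeasurable_mk.measurable
  have haa' : ∀ i, a i =ᵐ[μ] a' i := fun i => (ha i).1.ae_eq_mk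
  -- find a good set Z
  set A : ℕ → Set T := fun n =>
    {t | 1/(n+1 : ℝ) ≤ x' t} ∩ ⋂ i, {t | |a' i t| ≤ (n+1 : ℝ)} with hAdef
  have hAmeas : ∀ n, MeasurableSet (A n) := by
    intro n
    exact (measurableSet_le measurable_const hx'meas).inter
      (MeasurableSet.iInter fun i => measurableSet_le ((ha'meas i).abs) measurable_const)
  have hpos : 0 < μ {t | 0 < x' t} := by
    rcases eq_zero_or_pos (μ {t | 0 < x' t}) with h | h
    · exfalso
      apply hxne
      have h1 : ∀ᵐ t ∂μ, ¬ 0 < x' t := by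
        rw [ae_iff]; simpa using h
      filter_upwards [h1, hx0, hxx'] with t ht1 ht2 ht3
      have : x t ≤ 0 := ht3 ▸ not_lt.1 ht1
      simpa using le_antisymm this ht2
    · exact h
  have hsub : {t | 0 < x' t} ⊆ ⋃ n, A n := by
    intro t ht
    have ht : 0 < x' t := ht
    have hsum : (0:ℝ) ≤ ∑ i, |a' i t| := Finset.sum_nonneg fun i _ => abs_nonneg _
    obtain ⟨m, hm⟩ := exists_nat_ge ((x' t)⁻¹ + ∑ i, |a' i t|)
    refine Set.mem_iUnion.2 ⟨m, ?_, ?_⟩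
    · show 1/(m+1 : ℝ) ≤ x' t
      rw [div_le_iff₀ (by positivity)]
      nlinarith [mul_inv_cancel₀ (ne_of_gt ht)]
    · refine Set.mem_iInter.2 fun i => ?_
      have h1 : |a' i t| ≤ ∑ j, |a' j t| :=
        Finset.single_le_sum (fun j _ => abs_nonneg (a' j t)) (Finset.mem_univ i)
      have h2 : (x' t)⁻¹ ≥ 0 := le_of_lt (inv_pos.2 ht)
      show |a' i t| ≤ (m+1 : ℝ)
      linarith
  obtain ⟨n, hn⟩ : ∃ n, 0 < μ (A n) := by
    by_contra h
    push_neg at h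
    have h0 : μ (⋃ n, A n) = 0 :=
      measure_iUnion_null fun n => by simpa [nonpos_iff_eq_zero] using h n
    exact (hpos.trans_le (measure_mono hsub)).ne' h0
  set Z : Set T := A n with hZdef
  have hZm : MeasurableSet Z := hAmeas n
  have hZx : ∀ t ∈ Z, 1/(n+1 : ℝ) ≤ x' t := fun t ht => ht.1
  have hZa : ∀ t ∈ Z, ∀ i, |a' i t| ≤ (n+1 : ℝ) := by
    intro t ht i
    exact Set.mem_iInter.1 ht.2 i
  -- the weight
  set w : T → ℝ := fun t => min (x' t) 1 with hwdef
  have hwmeas : Measurable w := hx'meas.min measurable_const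
  have hw01 : ∀ t ∈ Z, 1/(n+1 : ℝ) ≤ w t ∧ w t ≤ 1 := by
    intro t ht
    refine ⟨le_min (hZx t ht) ?_, min_le_right _ _⟩
    rw [div_le_one (by positivity)]; linarith [Nat.cast_nonneg (α := ℝ) n]
  have hwpos : ∀ t ∈ Z, 0 < w t := fun t ht =>
    lt_of_lt_of_le (by positivity) (hw01 t ht).1
  -- integrability of bounded measurable functions on Z
  have hbint : ∀ (f : T → ℝ) (C : ℝ), Measurable f → (∀ t ∈ Z, |f t| ≤ C) →
      IntegrableOn f Z μ := by
    intro f C hf hC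
    refine Integrable.mono' (integrable_const C) hf.aestronglyMeasurable ?_
    exact (ae_restrict_iff' hZm).2 (ae_of_all _ fun t ht => by
      simpa [Real.norm_eq_abs] using hC t ht)
  -- the Gram matrix
  set G : Matrix ι ι ℝ := fun i j => ∫ t in Z, a' i t * a' j t * w t ∂μ with hGdef
  have hbase : ∀ i j, IntegrableOn (fun t => a' i t * a' j t * w t) Z μ := by
    intro i j
    refine hbint _ ((n+1)*(n+1)) (((ha'meas i).mul (ha'meas j)).mul hwmeas) fun t ht => ?_
    have h1 := hZa t ht i
    have h2 := hZa t ht j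
    have h3 := (hw01 t ht).2
    have h4 := (hwpos t ht).le
    have hw : |w t| ≤ 1 := abs_le.2 ⟨by linarith, h3⟩
    have hn1 : (0:ℝ) ≤ (n+1 : ℝ) := by positivity
    calc |a' i t * a' j t * w t| = |a' i t| * |a' j t| * |w t| := by rw [abs_mul, abs_mul]
      _ ≤ (n+1) * (n+1) * 1 := by gcongr <;> positivity
      _ = (n+1) * (n+1) := mul_one _
  have hexpand : ∀ (c : ι → ℝ) t, (∑ i, c i * a' i t)^2 * w t
      = ∑ i, ∑ j, c i * c j * (a' i t * a' j t * w t) := by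
    intro c t
    rw [sq, Finset.sum_mul_sum, Finset.sum_mul]
    refine Finset.sum_congr rfl fun i _ => ?_
    rw [Finset.sum_mul]
    exact Finset.sum_congr rfl fun j _ => by ring
  have hGentry : ∀ (r : ℝ) i j, ∫ t in Z, r * (a' i t * a' j t * w t) ∂μ = r * G i j := by
    intro r i j
    rw [integral_const_mul]
  have hkey : ∀ c : ι → ℝ,
      dotProduct c (G.mulVec c) = ∫ t in Z, (∑ i, c i * a' i t)^2 * w t ∂μ := by
    intro c
    have h1 : dotProduct c (G.mulVec c) = ∑ i, ∑ j, c i * c j * G i j := by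
      simp only [dotProduct, Matrix.mulVec, Finset.mul_sum]
      exact Finset.sum_congr rfl fun i _ => Finset.sum_congr rfl fun j _ => by ring
    rw [h1]
    have h2 : ∫ t in Z, (∑ i, c i * a' i t)^2 * w t ∂μ
        = ∫ t in Z, ∑ i, ∑ j, c i * c j * (a' i t * a' j t * w t) ∂μ :=
      integral_congr_ae (ae_of_all _ fun t => hexpand c t)
    rw [h2, integral_finset_sum _ fun i _ =>
      integrable_finset_sum _ fun j _ => (hbase i j).const_mul _]
    refine Finset.sum_congr rfl fun i _ => ?_
    rw [integral_finset_sum _ fun j _ => (hbase i j).const_mul _]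
    exact Finset.sum_congr rfl fun j _ => (hGentry _ i j).symm
  have hinj : Function.Injective G.mulVecLin := by
    refine (injective_iff_map_eq_zero G.mulVecLin).2 fun c hc => ?_
    rw [Matrix.mulVecLin_apply] at hc
    have h0 : ∫ t in Z, (∑ i, c i * a' i t)^2 * w t ∂μ = 0 := by
      rw [← hkey c, hc]
      simp [dotProduct]
    have hint : IntegrableOn (fun t => (∑ i, c i * a' i t)^2 * w t) Z μ := by
      have hsum : IntegrableOn (fun t => ∑ i, ∑ j, c i * c j * (a' i t * a' j t * w t)) Z μ :=
        integrable_finset_sum _ fun i _ =>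
          integrable_finset_sum _ fun j _ => (hbase i j).const_mul (c i * c j)
      exact hsum.congr (ae_of_all _ fun t => (hexpand c t).symm)
    have hnn : 0 ≤ᵐ[μ.restrict Z] fun t => (∑ i, c i * a' i t)^2 * w t := by
      refine (ae_restrict_iff' hZm).2 (ae_of_all _ fun t ht => ?_)
      exact mul_nonneg (sq_nonneg _) (hwpos t ht).le
    have hzero := (integral_eq_zero_iff_of_nonneg_ae hnn hint).1 h0
    have hzero' : ∀ᵐ t ∂μ, t ∈ Z → ∑ i, c i * a' i t = 0 := by
      have h := (ae_restrict_iff' hZm).1 hzero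
      filter_upwards [h] with t ht htZ
      have h2 := ht htZ
      simp only [Pi.zero_apply] at h2
      have hw := hwpos t htZ
      have hsq : (∑ i, c i * a' i t)^2 = 0 := by
        nlinarith [sq_nonneg (∑ i, c i * a' i t)]
      exact pow_eq_zero_iff (n := 2) (by norm_num) |>.1 hsq
    have haeq : ∀ᵐ t ∂μ, ∀ i, a i t = a' i t := ae_all_iff.2 haa'
    refine hindep Z hZm hn c ?_
    filter_upwards [hzero', haeq] with t h1 h2 htZ
    rw [show (∑ i, c i * a i t) = ∑ i, c i * a' i t from
      Finset.sum_congr rfl fun i _ => by rw [h2 i]]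
    exact h1 htZ
  have hbij : Function.Bijective G.mulVecLin :=
    ⟨hinj, LinearMap.injective_iff_surjective.1 hinj⟩
  set e : (ι → ℝ) ≃ₗ[ℝ] (ι → ℝ) := LinearEquiv.ofBijective G.mulVecLin hbij with hedef
  -- the defects
  set ε : ℕ → ι → ℝ := fun k i => ∫ t, a i t * (x t - min (x t) (k:ℝ)) ∂μ with hεdef
  have hεmeas : ∀ k i, AEStronglyMeasurable (fun t => a i t * (x t - min (x t) (k:ℝ))) μ :=
    fun k i => (ha i).1.mul (hx.1.sub (hx.1.inf aestronglyMeasurable_const))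
  have hεbound : ∀ (k : ℕ) i, ∀ᵐ t ∂μ, ‖a i t * (x t - min (x t) (k:ℝ))‖ ≤ |a i t| * x t := by
    intro k i
    filter_upwards [hx0] with t ht
    rw [Real.norm_eq_abs, abs_mul]
    have hmin : (0:ℝ) ≤ min (x t) (k:ℝ) := le_min ht (Nat.cast_nonneg k)
    have hminle : min (x t) (k:ℝ) ≤ x t := min_le_left _ _
    rw [abs_of_nonneg (by linarith : (0:ℝ) ≤ x t - min (x t) (k:ℝ))]
    exact mul_le_mul_of_nonneg_left (by linarith) (abs_nonneg _)
  have hεint : ∀ (k : ℕ) i, Integrable (fun t => a i t * (x t - min (x t) (k:ℝ))) μ :=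
    fun k i => (hax i).mono' (hεmeas k i) (hεbound k i)
  have hεtendsto : Tendsto ε atTop (nhds 0) := by
    rw [tendsto_pi_nhds]
    intro i
    have h := tendsto_integral_of_dominated_convergence (μ := μ)
      (F := fun k t => a i t * (x t - min (x t) (k:ℝ))) (f := fun _ => (0:ℝ))
      (fun t => |a i t| * x t) (fun k => hεmeas k i) (hax i) (fun k => hεbound k i) ?_
    · simpa [hεdef] using h
    · filter_upwards [hx0] with t ht
      obtain ⟨N, hN⟩ := exists_nat_ge (x t)
      refine Tendsto.congr' ?_ tendsto_const_nhds
      filter_upwards [eventually_ge_atTop N] with k hk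
      have hxk : x t ≤ (k:ℝ) := hN.trans (by exact_mod_cast hk)
      simp [min_eq_left hxk]
  set d : ℕ → ι → ℝ := fun k => e.symm (ε k) with hddef
  have hGd : ∀ k, G.mulVec (d k) = ε k := by
    intro k
    have h1 : G.mulVecLin (e.symm (ε k)) = ε k := e.apply_symm_apply (ε k)
    simpa [Matrix.mulVecLin_apply] using h1
  have hd0 : Tendsto d atTop (nhds 0) := by
    have hc : Continuous (e.symm : (ι → ℝ) →ₗ[ℝ] (ι → ℝ)) :=
      LinearMap.continuous_of_finiteDimensional _
    have := (hc.tendsto 0).comp hεtendsto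
    simpa [hddef, Function.comp_def] using this
  have hd0' : ∀ j, Tendsto (fun k => d k j) atTop (nhds 0) := by
    intro j
    have := (tendsto_pi_nhds.1 hd0) j
    simpa using this
  -- the perturbations
  set y : ℕ → T → ℝ := fun k => Z.indicator (fun t => (∑ j, d k j * a' j t) * w t) with hydef
  have hymeas : ∀ k, Measurable (y k) := by
    intro k
    exact ((Finset.measurable_sum _ fun j _ => (ha'meas j).const_mul _).mul hwmeas).indicator hZm
  set C : ℕ → ℝ := fun k => (∑ j, |d k j|) * (n+1 : ℝ) with hCdef
  have hybound : ∀ k t, t ∈ Z → |y k t| ≤ C k * w t := by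
    intro k t ht
    have hy : y k t = (∑ j, d k j * a' j t) * w t := Set.indicator_of_mem ht _
    rw [hy, abs_mul, abs_of_pos (hwpos t ht)]
    refine mul_le_mul_of_nonneg_right ?_ (hwpos t ht).le
    calc |∑ j, d k j * a' j t| ≤ ∑ j, |d k j * a' j t| := Finset.abs_sum_le_sum_abs _ _
      _ ≤ ∑ j, |d k j| * (n+1 : ℝ) := by
          refine Finset.sum_le_sum fun j _ => ?_
          rw [abs_mul]
          exact mul_le_mul_of_nonneg_left (hZa t ht j) (abs_nonneg _)
      _ = C k := (Finset.sum_mul _ _ _).symm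
  have hCnn : ∀ k, 0 ≤ C k := fun k =>
    mul_nonneg (Finset.sum_nonneg fun j _ => abs_nonneg _) (by positivity)
  have hyboundC : ∀ k t, |y k t| ≤ C k := by
    intro k t
    by_cases ht : t ∈ Z
    · calc |y k t| ≤ C k * w t := hybound k t ht
        _ ≤ C k * 1 := mul_le_mul_of_nonneg_left (hw01 t ht).2 (hCnn k)
        _ = C k := mul_one _
    · rw [show y k t = 0 from Set.indicator_of_notMem ht _]
      simpa using hCnn k
  have hC0 : Tendsto C atTop (nhds 0) := by
    have h : Tendsto (fun k => ∑ j, |d k j|) atTop (nhds 0) := by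
      have := tendsto_finset_sum (Finset.univ : Finset ι) (fun j _ => (hd0' j).abs)
      simpa using this
    have := h.mul_const ((n:ℝ)+1)
    simpa [hCdef] using this
  obtain ⟨k₀, hk₀⟩ : ∃ k₀ : ℕ, 1 ≤ k₀ ∧ ∀ k ≥ k₀, C k ≤ 1 := by
    have h : ∀ᶠ k in atTop, C k ≤ 1 :=
      hC0.eventually (eventually_le_nhds (by norm_num : (0:ℝ) < 1))
    obtain ⟨N, hN⟩ := eventually_atTop.1 h
    exact ⟨max N 1, le_max_right _ _, fun k hk => hN k ((le_max_left _ _).trans hk)⟩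
  -- moments of y
  have hmom : ∀ k i, ∫ t, a i t * y k t ∂μ = ε k i := by
    intro k i
    have step1 : ∫ t, a i t * y k t ∂μ
        = ∫ t in Z, a i t * ((∑ j, d k j * a' j t) * w t) ∂μ := by
      rw [← integral_indicator hZm]
      congr 1
      funext t
      by_cases ht : t ∈ Z
      · rw [Set.indicator_of_mem ht, show y k t = (∑ j, d k j * a' j t) * w t from
          Set.indicator_of_mem ht _]
      · rw [Set.indicator_of_notMem ht, show y k t = 0 from Set.indicator_of_notMem ht _,
          mul_zero]
    have step2 : ∫ t in Z, a i t * ((∑ j, d k j * a' j t) * w t) ∂μ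
        = ∫ t in Z, a' i t * ((∑ j, d k j * a' j t) * w t) ∂μ := by
      refine integral_congr_ae ?_
      filter_upwards [ae_restrict_of_ae (haa' i)] with t ht
      rw [ht]
    have step3 : ∫ t in Z, a' i t * ((∑ j, d k j * a' j t) * w t) ∂μ
        = ∑ j, d k j * G i j := by
      have hgt : ∀ t, a' i t * ((∑ j, d k j * a' j t) * w t)
          = ∑ j, d k j * (a' i t * a' j t * w t) := by
        intro t
        rw [Finset.sum_mul, Finset.mul_sum]
        exact Finset.sum_congr rfl fun j _ => by ring
      rw [integral_congr_ae (ae_of_all _ hgt),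
        integral_finset_sum _ fun j _ => (hbase i j).const_mul _]
      exact Finset.sum_congr rfl fun j _ => hGentry _ i j
    have step4 : ∑ j, d k j * G i j = ε k i := by
      have h := congrFun (hGd k) i
      simp only [Matrix.mulVec, dotProduct] at h
      rw [← h]
      exact Finset.sum_congr rfl fun j _ => mul_comm _ _
    rw [step1, step2, step3, step4]
  refine ⟨y, k₀, fun k hk => ?_⟩
  have hk₁ : 1 ≤ k := hk₀.1.trans hk
  have hCk : C k ≤ 1 := hk₀.2 k hk
  have hk1 : (1:ℝ) ≤ (k:ℝ) := by exact_mod_cast hk₁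
  refine ⟨?_, ?_, ?_, ?_, ?_⟩
  · exact memLp_top_of_bound (hymeas k).aestronglyMeasurable (C k)
      (ae_of_all _ fun t => by simpa [Real.norm_eq_abs] using hyboundC k t)
  · -- nonnegativity
    filter_upwards [hx0, hxx'] with t ht hxt
    by_cases htZ : t ∈ Z
    · have h1 := hybound k t htZ
      have h2 : C k * w t ≤ w t := by
        calc C k * w t ≤ 1 * w t := mul_le_mul_of_nonneg_right hCk (hwpos t htZ).le
          _ = w t := one_mul _
      have h3 : w t ≤ min (x t) (k:ℝ) := by
        have hwt : w t = min (x t) 1 := by rw [hxt]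
        rw [hwt]
        exact min_le_min le_rfl hk1
      have h4 := neg_le_of_abs_le h1
      linarith
    · rw [show y k t = 0 from Set.indicator_of_notMem htZ _, add_zero]
      exact le_min ht (Nat.cast_nonneg k)
  · -- moments
    intro i
    have hiax : Integrable (fun t => a i t * x t) μ := by
      refine (hax i).mono' ((ha i).1.mul hx.1) ?_
      filter_upwards [hx0] with t ht
      rw [Real.norm_eq_abs, abs_mul, abs_of_nonneg ht]
    have hiamin : Integrable (fun t => a i t * min (x t) (k:ℝ)) μ := by
      have heq : (fun t => a i t * min (x t) (k:ℝ))
          = fun t => a i t * x t - a i t * (x t - min (x t) (k:ℝ)) := funext fun t => by ring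
      rw [heq]
      exact hiax.sub (hεint k i)
    have hiay : Integrable (fun t => a i t * y k t) μ := by
      have heq : (fun t => a i t * y k t) = fun t => y k t * a i t :=
        funext fun t => mul_comm _ _
      rw [heq]
      exact (ha i).bdd_mul (hymeas k).aestronglyMeasurable
        (c := C k) (ae_of_all _ fun t => by simpa [Real.norm_eq_abs] using hyboundC k t)
    have hsplit : ∫ t, a i t * (min (x t) (k:ℝ) + y k t) ∂μ
        = (∫ t, a i t * min (x t) (k:ℝ) ∂μ) + ∫ t, a i t * y k t ∂μ := by
      rw [← integral_add hiamin hiay]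
      refine integral_congr_ae (ae_of_all _ fun t => ?_)
      ring
    have hεval : ε k i = (∫ t, a i t * x t ∂μ) - ∫ t, a i t * min (x t) (k:ℝ) ∂μ := by
      have heq : (fun t => a i t * (x t - min (x t) (k:ℝ)))
          = fun t => a i t * x t - a i t * min (x t) (k:ℝ) := funext fun t => by ring
      calc ε k i = ∫ t, (a i t * x t - a i t * min (x t) (k:ℝ)) ∂μ := by
            rw [hεdef]; exact integral_congr_ae (ae_of_all _ fun t => by ring)
        _ = _ := integral_sub hiax hiamin
    rw [hsplit, hmom k i, hεval]
    ring
  · -- |y| ≤ x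
    filter_upwards [hx0, hxx'] with t ht hxt
    by_cases htZ : t ∈ Z
    · have h1 := hybound k t htZ
      have h2 : C k * w t ≤ w t := by
        calc C k * w t ≤ 1 * w t := mul_le_mul_of_nonneg_right hCk (hwpos t htZ).le
          _ = w t := one_mul _
      have h3 : w t ≤ x t := by
        rw [hxt]
        exact min_le_left _ _
      linarith
    · rw [show y k t = 0 from Set.indicator_of_notMem htZ _]
      simpa using ht
  · -- tendsto
    refine ae_of_all _ fun t => ?_
    by_cases htZ : t ∈ Z
    · have hyeq : ∀ m, y m t = (∑ j, d m j * a' j t) * w t :=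
        fun m => Set.indicator_of_mem htZ _
      have h : Tendsto (fun m => (∑ j, d m j * a' j t) * w t) atTop (nhds 0) := by
        have hs : Tendsto (fun m => ∑ j, d m j * a' j t) atTop (nhds 0) := by
          have := tendsto_finset_sum (Finset.univ : Finset ι)
            (fun j _ => (hd0' j).mul_const (a' j t))
          simpa using this
        have := hs.mul_const (w t)
        simpa using this
      exact h.congr fun m => (hyeq m).symm
    · have hyeq : ∀ m, y m t = 0 := fun m => Set.indicator_of_notMem htZ _
      exact tendsto_const_nhds.congr fun m => (hyeq m).symm
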